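/- For real numbers a > b > 0, define I(a, b) = (1/(2a)) · ∫_1^∞ dx / √(x(x−1)(x−(1−b²/a²))). Then I(a, b) = I((a+b)/2, √(ab)); that is, the elliptic integral I is invariant under one step of the arithmetic-geometric mean iteration. -/

import Mathlib

open MeasureTheory
open Set

/-- The elliptic integral `I(a, b) = (1/(2a)) ∫_1^∞ dx / √(x(x-1)(x-(1-b²/a²)))`. -/
noncomputable def agmIntegral (a b : ℝ) : ℝ :=
  (1 / (2 * a)) * ∫ x in Set.Ioi (1 : ℝ), 1 / Real.sqrt (x * (x - 1) * (x - (1 - b ^ 2 / a ^ 2)))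

noncomputable def gaussFun (a b t : ℝ) : ℝ := 1 / Real.sqrt ((t ^ 2 + a ^ 2) * (t ^ 2 + b ^ 2))

lemma sqrt_sq_mul {c S : ℝ} (hc : 0 ≤ c) : Real.sqrt (c ^ 2 * S) = c * Real.sqrt S := by
  rw [Real.sqrt_mul (sq_nonneg c), Real.sqrt_sq hc]

/-- Step 1: `agmIntegral a b = ∫_{Ioi 0} gaussFun a b`. -/
lemma agmIntegral_eq_gauss {a b : ℝ} (hb : 0 < b) (hba : b < a) :
    agmIntegral a b = ∫ t in Ioi (0 : ℝ), gaussFun a b t := by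
  have ha : 0 < a := hb.trans hba
  set f : ℝ → ℝ := fun t => t ^ 2 / a ^ 2 + 1 with hf
  have himg : f '' Ioi (0 : ℝ) = Ioi 1 := by
    ext x
    constructor
    · rintro ⟨t, ht, rfl⟩
      have ht' : (0:ℝ) < t := ht
      have : 0 < t ^ 2 / a ^ 2 := by positivity
      simp only [hf, mem_Ioi]
      linarith
    · intro hx
      have hx' : (1:ℝ) < x := hx
      refine ⟨a * Real.sqrt (x - 1), ?_, ?_⟩
      · have : 0 < Real.sqrt (x - 1) := Real.sqrt_pos.mpr (by linarith)
        exact mul_pos ha this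
      · simp only [hf]
        rw [mul_pow, Real.sq_sqrt (by linarith : (0:ℝ) ≤ x - 1)]
        field_simp
        ring
  have hderiv : ∀ t ∈ Ioi (0:ℝ), HasDerivWithinAt f (2 * t / a ^ 2) (Ioi 0) t := by
    intro t _
    have : HasDerivAt f (((2:ℕ) : ℝ) * t ^ (2 - 1) / a ^ 2) t :=
      ((hasDerivAt_pow 2 t).div_const _).add_const 1
    simpa using this.hasDerivWithinAt
  have hinj : InjOn f (Ioi 0) := by
    intro x hx y hy h
    have hx' : (0:ℝ) < x := hx
    have hy' : (0:ℝ) < y := hy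
    simp only [hf] at h
    field_simp at h
    exact (pow_left_inj₀ hx'.le hy'.le two_ne_zero).mp (by linarith)
  rw [agmIntegral, ← himg,
    integral_image_eq_integral_abs_deriv_smul measurableSet_Ioi hderiv hinj,
    ← integral_const_mul]
  refine setIntegral_congr_fun measurableSet_Ioi ?_
  intro t ht
  have ht' : (0:ℝ) < t := ht
  have hS : 0 < (t ^ 2 + a ^ 2) * (t ^ 2 + b ^ 2) := by positivity
  have key : f t * (f t - 1) * (f t - (1 - b ^ 2 / a ^ 2))
      = (t / a ^ 3) ^ 2 * ((t ^ 2 + a ^ 2) * (t ^ 2 + b ^ 2)) := by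
    simp only [hf]; field_simp; ring
  have hsq : Real.sqrt (f t * (f t - 1) * (f t - (1 - b ^ 2 / a ^ 2)))
      = t / a ^ 3 * Real.sqrt ((t ^ 2 + a ^ 2) * (t ^ 2 + b ^ 2)) := by
    rw [key, sqrt_sq_mul (by positivity)]
  have habs : |2 * t / a ^ 2| = 2 * t / a ^ 2 := abs_of_pos (by positivity)
  have hs : 0 < Real.sqrt ((t ^ 2 + a ^ 2) * (t ^ 2 + b ^ 2)) := Real.sqrt_pos.mpr hS
  simp only [smul_eq_mul]
  rw [habs, hsq, gaussFun]
  field_simp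

/-- Step 2: reflection `t ↦ ab/t`. -/
lemma gauss_reflect {a b : ℝ} (hb : 0 < b) (ha : 0 < a) :
    ∫ t in Ioo (0:ℝ) (Real.sqrt (a * b)), gaussFun a b t
      = ∫ t in Ioi (Real.sqrt (a * b)), gaussFun a b t := by
  set r := Real.sqrt (a * b) with hr
  have hab : 0 < a * b := mul_pos ha hb
  have hr0 : 0 < r := Real.sqrt_pos.mpr hab
  have hrr : r * r = a * b := Real.mul_self_sqrt hab.le
  set f : ℝ → ℝ := fun t => a * b * t⁻¹ with hf
  have himg : f '' Ioi r = Ioo 0 r := by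
    ext x
    constructor
    · rintro ⟨t, ht, rfl⟩
      have ht' : r < t := ht
      have ht0 : 0 < t := hr0.trans ht'
      have h1 : a * b * t⁻¹ < r := by
        rw [mul_inv_lt_iff₀' ht0]
        nlinarith
      exact ⟨by simp only [hf]; positivity, by simpa [hf] using h1⟩
    · rintro ⟨hx0, hxr⟩
      refine ⟨a * b / x, ?_, ?_⟩
      · rw [mem_Ioi, lt_div_iff₀ hx0]
        nlinarith
      · simp only [hf]
        field_simp
  have hderiv : ∀ t ∈ Ioi r, HasDerivWithinAt f (a * b * -(t ^ 2)⁻¹) (Ioi r) t := by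
    intro t ht
    have ht0 : t ≠ 0 := ne_of_gt (hr0.trans ht)
    exact ((hasDerivAt_inv ht0).const_mul (a * b)).hasDerivWithinAt
  have hinj : InjOn f (Ioi r) := by
    intro x hx y hy h
    have hx0 : (0:ℝ) < x := hr0.trans hx
    have hy0 : (0:ℝ) < y := hr0.trans hy
    simp only [hf] at h
    have hx1 : x ≠ 0 := hx0.ne'
    have hy1 : y ≠ 0 := hy0.ne'
    field_simp at h
    exact h.symm
  rw [← himg, integral_image_eq_integral_abs_deriv_smul measurableSet_Ioi hderiv hinj]
  refine setIntegral_congr_fun measurableSet_Ioi ?_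
  intro t ht
  have ht0 : 0 < t := hr0.trans ht
  have habs : |a * b * -(t ^ 2)⁻¹| = a * b / t ^ 2 := by
    rw [abs_of_neg (by simp only [mul_neg, neg_neg, neg_lt_zero]; positivity)]
    field_simp
  have hS : 0 < (t ^ 2 + a ^ 2) * (t ^ 2 + b ^ 2) := by positivity
  have hs : 0 < Real.sqrt ((t ^ 2 + a ^ 2) * (t ^ 2 + b ^ 2)) := Real.sqrt_pos.mpr hS
  have key : ((f t) ^ 2 + a ^ 2) * ((f t) ^ 2 + b ^ 2)
      = (a * b / t ^ 2) ^ 2 * ((t ^ 2 + a ^ 2) * (t ^ 2 + b ^ 2)) := by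
    simp only [hf]; field_simp; ring
  have hsq : Real.sqrt (((f t) ^ 2 + a ^ 2) * ((f t) ^ 2 + b ^ 2))
      = a * b / t ^ 2 * Real.sqrt ((t ^ 2 + a ^ 2) * (t ^ 2 + b ^ 2)) := by
    rw [key, sqrt_sq_mul (by positivity)]
  simp only [smul_eq_mul]
  rw [habs, gaussFun, gaussFun, hsq]
  have ht2 : (t:ℝ) ^ 2 ≠ 0 := by positivity
  field_simp

/-- Step 3: the Gauss substitution `t ↦ (t - ab/t)/2`. -/
lemma gauss_step {a b : ℝ} (hb : 0 < b) (hba : b < a) :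
    ∫ u in Ioi (0:ℝ), gaussFun ((a + b) / 2) (Real.sqrt (a * b)) u
      = ∫ t in Ioi (Real.sqrt (a * b)), 2 * gaussFun a b t := by
  have ha : 0 < a := hb.trans hba
  set r := Real.sqrt (a * b) with hr
  have hab : 0 < a * b := mul_pos ha hb
  have hr0 : 0 < r := Real.sqrt_pos.mpr hab
  have hrr : r * r = a * b := Real.mul_self_sqrt hab.le
  set f : ℝ → ℝ := fun t => (t - a * b * t⁻¹) / 2 with hf
  have himg : f '' Ioi r = Ioi 0 := by
    ext u
    constructor
    · rintro ⟨t, ht, rfl⟩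
      have ht' : r < t := ht
      have ht0 : 0 < t := hr0.trans ht'
      have h1 : a * b < t * t := by nlinarith
      simp only [hf, mem_Ioi]
      have : a * b * t⁻¹ < t := by
        rw [mul_inv_lt_iff₀ ht0]; nlinarith
      linarith
    · intro hu
      have hu' : (0:ℝ) < u := hu
      have hq : (0:ℝ) ≤ u ^ 2 + a * b := by positivity
      set s := Real.sqrt (u ^ 2 + a * b) with hs
      have hs2 : s ^ 2 = u ^ 2 + a * b := Real.sq_sqrt hq
      have hsr : r ≤ s := by
        rw [hr, hs]
        exact Real.sqrt_le_sqrt (by nlinarith)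
      have hspos : 0 < s := lt_of_lt_of_le hr0 hsr
      refine ⟨u + s, ?_, ?_⟩
      · rw [mem_Ioi]; linarith
      · simp only [hf]
        have hts : (0:ℝ) < u + s := by linarith
        field_simp
        nlinarith
  have hderiv : ∀ t ∈ Ioi r, HasDerivWithinAt f ((1 - a * b * -(t ^ 2)⁻¹) / 2) (Ioi r) t := by
    intro t ht
    have ht0 : t ≠ 0 := ne_of_gt (hr0.trans ht)
    exact (((hasDerivAt_id t).sub ((hasDerivAt_inv ht0).const_mul (a * b))).div_const 2).hasDerivWithinAt
  have hinj : InjOn f (Ioi r) := by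
    intro x hx y hy h
    have hx0 : (0:ℝ) < x := hr0.trans hx
    have hy0 : (0:ℝ) < y := hr0.trans hy
    simp only [hf] at h
    field_simp at h
    nlinarith [mul_pos hx0 hy0]
  rw [← himg, integral_image_eq_integral_abs_deriv_smul measurableSet_Ioi hderiv hinj]
  refine setIntegral_congr_fun measurableSet_Ioi ?_
  intro t ht
  have ht0 : 0 < t := hr0.trans ht
  have hS : 0 < (t ^ 2 + a ^ 2) * (t ^ 2 + b ^ 2) := by positivity
  have hs : 0 < Real.sqrt ((t ^ 2 + a ^ 2) * (t ^ 2 + b ^ 2)) := Real.sqrt_pos.mpr hS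
  have ht2' : (t:ℝ) ^ 2 ≠ 0 := by positivity
  have hd : (1 - a * b * -(t ^ 2)⁻¹) / 2 = (t ^ 2 + a * b) / (2 * t ^ 2) := by
    field_simp
    ring_nf
  have habs : |(1 - a * b * -(t ^ 2)⁻¹) / 2| = (t ^ 2 + a * b) / (2 * t ^ 2) := by
    rw [hd]; exact abs_of_pos (by positivity)
  have key : ((f t) ^ 2 + ((a + b) / 2) ^ 2) * ((f t) ^ 2 + r ^ 2)
      = ((t ^ 2 + a * b) / (4 * t ^ 2)) ^ 2 * ((t ^ 2 + a ^ 2) * (t ^ 2 + b ^ 2)) := by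
    have hr2 : r ^ 2 = a * b := by rw [sq]; exact hrr
    simp only [hf, hr2]
    field_simp
    ring
  have hsq : Real.sqrt (((f t) ^ 2 + ((a + b) / 2) ^ 2) * ((f t) ^ 2 + r ^ 2))
      = (t ^ 2 + a * b) / (4 * t ^ 2) * Real.sqrt ((t ^ 2 + a ^ 2) * (t ^ 2 + b ^ 2)) := by
    rw [key, sqrt_sq_mul (by positivity)]
  have htab : 0 < t ^ 2 + a * b := by positivity
  simp only [smul_eq_mul]
  rw [habs, gaussFun, gaussFun, hsq]
  have ht2 : (t:ℝ) ^ 2 ≠ 0 := by positivity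
  field_simp
  ring

/-- Integrability of the Gauss integrand. -/
lemma gauss_integrable {a b : ℝ} (hb : 0 < b) (hba : b ≤ a) :
    Integrable (gaussFun a b) := by
  have ha : 0 < a := lt_of_lt_of_le hb hba
  have hcont : Continuous (gaussFun a b) := by
    apply Continuous.div continuous_const
    · exact ((continuous_pow 2).add continuous_const).mul
        ((continuous_pow 2).add continuous_const) |>.sqrt
    · intro t
      have hS : 0 < (t ^ 2 + a ^ 2) * (t ^ 2 + b ^ 2) := by positivity
      exact ne_of_gt (Real.sqrt_pos.mpr hS)
  have hbound : Integrable (fun t : ℝ => b⁻¹ * b⁻¹ * (1 + (t / b) ^ 2)⁻¹) :=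
    (integrable_inv_one_add_sq.comp_div (ne_of_gt hb)).const_mul _
  refine hbound.mono' hcont.aestronglyMeasurable (Filter.Eventually.of_forall fun t => ?_)
  have hS : 0 < (t ^ 2 + a ^ 2) * (t ^ 2 + b ^ 2) := by positivity
  have hs : 0 < Real.sqrt ((t ^ 2 + a ^ 2) * (t ^ 2 + b ^ 2)) := Real.sqrt_pos.mpr hS
  have hle : t ^ 2 + b ^ 2 ≤ Real.sqrt ((t ^ 2 + a ^ 2) * (t ^ 2 + b ^ 2)) := by
    rw [Real.le_sqrt (by positivity) hS.le]
    have h3 : 0 ≤ (t ^ 2 + b ^ 2) * ((a + b) * (a - b)) :=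
      mul_nonneg (by positivity) (mul_nonneg (by linarith) (by linarith))
    nlinarith [h3]
  have h1 : ‖gaussFun a b t‖ = gaussFun a b t := by
    rw [Real.norm_eq_abs, abs_of_pos]
    rw [gaussFun]; positivity
  rw [h1, gaussFun]
  have hb0 : b ≠ 0 := hb.ne'
  have h2 : b⁻¹ * b⁻¹ * (1 + (t / b) ^ 2)⁻¹ = (b ^ 2 + t ^ 2)⁻¹ := by
    field_simp
  rw [h2, one_div]
  apply inv_anti₀ (by positivity)
  rw [add_comm (b^2)]
  exact hle

/-- For real numbers `a > b > 0`, the elliptic integral `I(a, b)` is invariant under one step of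
the arithmetic-geometric mean iteration: `I(a, b) = I((a+b)/2, √(ab))`. -/
theorem agmIntegral_invariant (a b : ℝ) (hb : 0 < b) (hba : b < a) :
    agmIntegral a b = agmIntegral ((a + b) / 2) (Real.sqrt (a * b)) := by
  have ha : 0 < a := hb.trans hba
  set r := Real.sqrt (a * b) with hr
  have hab : 0 < a * b := mul_pos ha hb
  have hr0 : 0 < r := Real.sqrt_pos.mpr hab
  have hram : r < (a + b) / 2 := by
    rw [hr]
    have h1 : Real.sqrt (a * b) < Real.sqrt (((a + b) / 2) ^ 2) :=
      Real.sqrt_lt_sqrt hab.le (by nlinarith)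
    rwa [Real.sqrt_sq (by linarith)] at h1
  rw [agmIntegral_eq_gauss hb hba, agmIntegral_eq_gauss hr0 hram, gauss_step hb hba,
    integral_const_mul]
  have hi : IntegrableOn (gaussFun a b) (Ioi 0) := (gauss_integrable hb hba.le).integrableOn
  have hsplit : ∫ t in Ioi (0:ℝ), gaussFun a b t
      = (∫ t in Ioc (0:ℝ) r, gaussFun a b t) + ∫ t in Ioi r, gaussFun a b t := by
    rw [← setIntegral_union (Ioc_disjoint_Ioi le_rfl) measurableSet_Ioi
      ((gauss_integrable hb hba.le).integrableOn) ((gauss_integrable hb hba.le).integrableOn),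
      Ioc_union_Ioi_eq_Ioi hr0.le]
  rw [hsplit, integral_Ioc_eq_integral_Ioo, gauss_reflect hb ha]
  ring
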